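/- arXiv:1101.2183 — 3 statements merged into one kernel-verified Lean document; each statement's English description precedes it below -/
import Mathlib

section
/- For 0 < δ < 1 and λ > 0, the double sum ∑_{k≥1} (e^{λ(1-δ)^{k-1}} - 1) is at most (e^λ - 1)/δ. -/
lemma exp_sub_one_le (lam x : ℝ) (hx0 : 0 ≤ x) (hx1 : x ≤ 1) :
    Real.exp (lam * x) - 1 ≤ x * (Real.exp lam - 1) := by
  have h := convexOn_exp.2 (Set.mem_univ lam) (Set.mem_univ 0) hx0
    (by linarith : (0:ℝ) ≤ 1 - x) (by ring)
  simp only [smul_eq_mul, mul_zero, add_zero, Real.exp_zero] at h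
  have : Real.exp (lam * x) ≤ x * Real.exp lam + (1 - x) := by
    rw [mul_comm]; simpa using h
  linarith

theorem stmt_2 (δ lam : ℝ) (hδ0 : 0 < δ) (hδ1 : δ < 1) (hlam : 0 < lam) :
    (∑' k : ℕ, (Real.exp (lam * (1 - δ) ^ k) - 1)) ≤ (Real.exp lam - 1) / δ := by
  have hq0 : (0:ℝ) ≤ 1 - δ := by linarith
  have hq1 : (1:ℝ) - δ < 1 := by linarith
  have hle : ∀ k : ℕ, Real.exp (lam * (1 - δ) ^ k) - 1 ≤ (1 - δ) ^ k * (Real.exp lam - 1) :=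
    fun k => exp_sub_one_le lam _ (pow_nonneg hq0 k) (pow_le_one₀ hq0 (by linarith))
  have hnn : ∀ k : ℕ, 0 ≤ Real.exp (lam * (1 - δ) ^ k) - 1 := by
    intro k
    have : (1:ℝ) ≤ Real.exp (lam * (1 - δ) ^ k) :=
      Real.one_le_exp (mul_nonneg hlam.le (pow_nonneg hq0 k))
    linarith
  have hsumgeo : Summable fun k : ℕ => (1 - δ) ^ k * (Real.exp lam - 1) :=
    (summable_geometric_of_lt_one hq0 hq1).mul_right _
  have hsum : Summable fun k : ℕ => Real.exp (lam * (1 - δ) ^ k) - 1 :=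
    Summable.of_nonneg_of_le hnn hle hsumgeo
  calc (∑' k : ℕ, (Real.exp (lam * (1 - δ) ^ k) - 1))
      ≤ ∑' k : ℕ, (1 - δ) ^ k * (Real.exp lam - 1) := Summable.tsum_le_tsum hle hsum hsumgeo
    _ = (Real.exp lam - 1) / δ := by
        rw [tsum_mul_right, tsum_geometric_of_lt_one hq0 hq1]
        field_simp
        rw [sub_sub_cancel, mul_div_cancel_left₀ _ hδ0.ne']
end

section
/- Let (T_k)_{k≥1} be i.i.d. geometric random variables with P(T_1 = j) = p^{j-1}(1-p), j ≥ 1, 0 < p < 1, and let 0 < δ < 1. Then for any t > 0 and any λ > 0 with e^λ p ≤ 1/2, P(∑_{k≥1} (1-δ)^{k-1} T_k ≥ t) ≤ exp(-tλ + λ/δ + (2p/(1-p))·(e^λ - 1)/δ). -/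
open MeasureTheory Real ENNReal

set_option maxHeartbeats 1000000

lemma geom_zero {Ω : Type*} [MeasureSpace Ω] {μ : Measure Ω} [IsProbabilityMeasure μ]
    (T : Ω → ℕ) (hTm : Measurable T) {p : ℝ} (hp0 : 0 < p) (hp1 : p < 1)
    (hgeom : ∀ j : ℕ, 1 ≤ j → μ {ω | T ω = j} = ENNReal.ofReal (p ^ (j - 1) * (1 - p))) :
    μ {ω | T ω = 0} = 0 := by
  have hmeas : ∀ j : ℕ, MeasurableSet {ω | T ω = j} := fun j =>
    hTm (measurableSet_singleton j)
  have hsum : ∑' j : ℕ, μ {ω | T ω = j} = 1 := by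
    rw [← measure_iUnion (fun i j hij => Set.disjoint_left.mpr
        (fun ω h1 h2 => hij (h1.symm.trans h2))) hmeas]
    have : (⋃ j : ℕ, {ω | T ω = j}) = Set.univ := by
      ext ω; simp [Set.mem_iUnion]
    rw [this, measure_univ]
  have htail : ∑' j : ℕ, μ {ω | T ω = j + 1} = 1 := by
    have h1 : ∀ j : ℕ, μ {ω | T ω = j + 1} = ENNReal.ofReal ((1 - p) * p ^ j) := by
      intro j
      rw [hgeom (j+1) (Nat.le_add_left 1 j)]
      simp [mul_comm]
    simp_rw [h1]
    rw [← ENNReal.ofReal_tsum_of_nonneg (fun j => mul_nonneg (by linarith) (pow_nonneg hp0.le j))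
        ((summable_geometric_of_lt_one hp0.le hp1).mul_left _)]
    rw [tsum_mul_left, tsum_geometric_of_lt_one hp0.le hp1]
    rw [mul_inv_cancel₀ (by linarith), ENNReal.ofReal_one]
  have hshift : ∑' j : ℕ, μ {ω | T ω = j}
      = μ {ω | T ω = 0} + ∑' j : ℕ, μ {ω | T ω = j + 1} :=
    tsum_eq_zero_add' ENNReal.summable
  rw [hsum, htail] at hshift
  have h2 : μ {ω | T ω = 0} + 1 = 0 + 1 := by rw [zero_add, ← hshift]
  exact WithTop.add_right_cancel ENNReal.one_ne_top h2

lemma geom_integral {Ω : Type*} [MeasureSpace Ω] {μ : Measure Ω} [IsProbabilityMeasure μ]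
    (T : Ω → ℕ) (hTm : Measurable T) {p : ℝ} (hp0 : 0 < p) (hp1 : p < 1)
    (hgeom : ∀ j : ℕ, 1 ≤ j → μ {ω | T ω = j} = ENNReal.ofReal (p ^ (j - 1) * (1 - p)))
    (h0 : μ {ω | T ω = 0} = 0)
    {s : ℝ} (hps : p * Real.exp s < 1) :
    Integrable (fun ω => Real.exp (s * (T ω : ℝ))) μ ∧
      ∫ ω, Real.exp (s * (T ω : ℝ)) ∂μ = (1 - p) * Real.exp s / (1 - p * Real.exp s) := by
  set ν : Measure ℕ := μ.map T with hν
  have hνsing : ∀ j : ℕ, ν {j} = μ {ω | T ω = j} := by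
    intro j
    rw [hν, Measure.map_apply hTm (measurableSet_singleton j)]
    rfl
  set g : ℕ → ℝ := fun j => Real.exp (s * j) with hg
  have hgm : Measurable g := measurable_from_top
  have hr0 : 0 ≤ p * Real.exp s := by positivity
  have hsummg : Summable (fun j : ℕ => ((1 - p) * Real.exp s) * (p * Real.exp s) ^ j) :=
    (summable_geometric_of_lt_one hr0 hps).mul_left _
  have hterm : ∀ j : ℕ, Real.exp (s * ((j : ℝ) + 1)) * (p ^ j * (1 - p))
      = ((1 - p) * Real.exp s) * (p * Real.exp s) ^ j := by
    intro j
    rw [mul_pow, ← Real.exp_nat_mul]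
    rw [show s * ((j : ℝ) + 1) = (j : ℝ) * s + s by ring, Real.exp_add]
    ring
  -- Integrability of g on ν
  have hint : Integrable g ν := by
    refine ⟨hgm.aestronglyMeasurable, ?_⟩
    rw [hasFiniteIntegral_def, lintegral_countable']
    have heq : ∀ j : ℕ, ‖g j‖ₑ * ν {j}
        = ENNReal.ofReal (if j = 0 then 0 else ((1 - p) * Real.exp s) * (p * Real.exp s) ^ (j - 1)) := by
      intro j
      match j with
      | 0 => simp [hνsing, h0]
      | (j+1) =>
        simp only [hg]
        rw [hνsing, hgeom (j+1) (Nat.le_add_left 1 j)]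
        simp only [Nat.add_sub_cancel, if_neg (Nat.succ_ne_zero j)]
        rw [Real.enorm_eq_ofReal (le_of_lt (Real.exp_pos _)),
          ← ENNReal.ofReal_mul (le_of_lt (Real.exp_pos _)), ← hterm j]
        congr 1
        push_cast
        ring_nf
    simp_rw [heq]
    rw [← ENNReal.ofReal_tsum_of_nonneg]
    · exact ENNReal.ofReal_lt_top
    · intro j
      rcases j with _ | j
      · simp
      · simp only [if_neg (Nat.succ_ne_zero j), Nat.add_sub_cancel]
        have : 0 ≤ (p * Real.exp s) ^ j := pow_nonneg hr0 j
        exact mul_nonneg (mul_nonneg (by linarith) (Real.exp_pos s).le) this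
    · apply (summable_nat_add_iff 1).mp
      simpa using hsummg
  have hintT : Integrable (fun ω => Real.exp (s * (T ω : ℝ))) μ := by
    have := (integrable_map_measure hgm.aestronglyMeasurable hTm.aemeasurable).mp hint
    exact this
  refine ⟨hintT, ?_⟩
  have h1 : ∫ ω, Real.exp (s * (T ω : ℝ)) ∂μ = ∫ j, g j ∂ν := by
    rw [hν, integral_map hTm.aemeasurable hgm.aestronglyMeasurable]
  rw [h1, integral_countable' hint]
  have heq : ∀ j : ℕ, (ν {j}).toReal • g j
      = (if j = 0 then 0 else ((1 - p) * Real.exp s) * (p * Real.exp s) ^ (j - 1)) := by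
    intro j
    match j with
    | 0 => simp [hνsing, h0]
    | (j+1) =>
      simp only [hg]
      rw [hνsing, hgeom (j+1) (Nat.le_add_left 1 j)]
      simp only [Nat.add_sub_cancel, if_neg (Nat.succ_ne_zero j)]
      rw [ENNReal.toReal_ofReal (by nlinarith [pow_nonneg hp0.le j])]
      rw [← hterm j, smul_eq_mul]
      push_cast
      ring_nf
  simp_rw [measureReal_def, heq]
  rw [tsum_eq_zero_add' (by simpa using hsummg)]
  simp only [if_neg (Nat.succ_ne_zero _), Nat.add_sub_cancel, add_zero, reduceIte, zero_add]
  rw [tsum_mul_left, tsum_geometric_of_lt_one hr0 hps]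
  rw [div_eq_mul_inv]

lemma key_ineq {p s lam : ℝ} (hp0 : 0 < p) (hp1 : p < 1) (hs0 : 0 < s)
    (hsl : s ≤ lam) (hlp : Real.exp lam * p ≤ 1/2) :
    (1 - p) * Real.exp s / (1 - p * Real.exp s)
      ≤ Real.exp (s + (2 * p / (1 - p)) * ((Real.exp lam - 1) / lam) * s) := by
  have hl : 0 < lam := lt_of_lt_of_le hs0 hsl
  have hes : Real.exp s ≤ Real.exp lam := Real.exp_le_exp.mpr hsl
  have hpes : p * Real.exp s ≤ 1/2 := by nlinarith [Real.exp_pos s]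
  have hden : (1:ℝ)/2 ≤ 1 - p * Real.exp s := by linarith
  have hdenpos : 0 < 1 - p * Real.exp s := by linarith
  have hes1 : (1:ℝ) ≤ Real.exp s := by
    rw [← Real.exp_zero]; exact Real.exp_le_exp.mpr hs0.le
  -- convexity: exp s - 1 ≤ (s/lam) * (exp lam - 1)
  have hconv : Real.exp s - 1 ≤ (s / lam) * (Real.exp lam - 1) := by
    have h1 : 0 ≤ 1 - s / lam := by
      rw [sub_nonneg, div_le_one hl]; exact hsl
    have h2 : 0 ≤ s / lam := by positivity
    have h3 : (1 - s / lam) + s / lam = 1 := by ring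
    have := convexOn_exp.2 (Set.mem_univ (0:ℝ)) (Set.mem_univ lam) h1 h2 h3
    simp only [smul_eq_mul, mul_zero, zero_add, Real.exp_zero, mul_one] at this
    rw [div_mul_cancel₀ _ hl.ne'] at this
    nlinarith
  -- step 1: ratio = 1 + p*(exp s - 1)/(1 - p exp s)
  have hratio : (1 - p) / (1 - p * Real.exp s)
      = 1 + p * (Real.exp s - 1) / (1 - p * Real.exp s) := by
    field_simp
    ring
  have hb1 : p * (Real.exp s - 1) / (1 - p * Real.exp s) ≤ 2 * p * (Real.exp s - 1) := by
    rw [div_le_iff₀ hdenpos]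
    nlinarith [mul_nonneg (mul_nonneg hp0.le (by linarith : (0:ℝ) ≤ Real.exp s - 1))
      (by linarith : (0:ℝ) ≤ 2 * (1 - p * Real.exp s) - 1)]
  have hb2 : 2 * p * (Real.exp s - 1) ≤ (2 * p / (1 - p)) * ((Real.exp lam - 1) / lam) * s := by
    have h1p : 0 < 1 - p := by linarith
    have hle : 2 * p * (Real.exp s - 1) ≤ 2 * p * ((s / lam) * (Real.exp lam - 1)) := by
      apply mul_le_mul_of_nonneg_left hconv (by positivity)
    refine hle.trans ?_
    have hexp1 : 0 ≤ Real.exp lam - 1 := by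
      have : (1:ℝ) ≤ Real.exp lam := hes1.trans hes
      linarith
    have hq : 0 ≤ (Real.exp lam - 1) / lam * s := by positivity
    have h2p : 2 * p ≤ 2 * p / (1 - p) := by
      rw [le_div_iff₀ h1p]; nlinarith
    calc 2 * p * (s / lam * (Real.exp lam - 1))
        = (2 * p) * ((Real.exp lam - 1) / lam * s) := by ring
      _ ≤ (2 * p / (1 - p)) * ((Real.exp lam - 1) / lam * s) :=
          mul_le_mul_of_nonneg_right h2p hq
      _ = (2 * p / (1 - p)) * ((Real.exp lam - 1) / lam) * s := by ring
  have hfinal : (1 - p) / (1 - p * Real.exp s)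
      ≤ Real.exp ((2 * p / (1 - p)) * ((Real.exp lam - 1) / lam) * s) := by
    rw [hratio]
    calc 1 + p * (Real.exp s - 1) / (1 - p * Real.exp s)
        ≤ 1 + (2 * p / (1 - p)) * ((Real.exp lam - 1) / lam) * s := by linarith
      _ ≤ _ := by
          linarith [Real.add_one_le_exp (2 * p / (1 - p) * ((Real.exp lam - 1) / lam) * s)]
  calc (1 - p) * Real.exp s / (1 - p * Real.exp s)
      = Real.exp s * ((1 - p) / (1 - p * Real.exp s)) := by ring
    _ ≤ Real.exp s * Real.exp ((2 * p / (1 - p)) * ((Real.exp lam - 1) / lam) * s) := by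
        apply mul_le_mul_of_nonneg_left hfinal (Real.exp_pos s).le
    _ = _ := by rw [← Real.exp_add]


/-- Chernoff bound for a weighted sum of i.i.d. geometric random
variables. -/
theorem stmt_6 {Ω : Type*} [MeasureSpace Ω] (μ : Measure Ω) [IsProbabilityMeasure μ]
    (T : ℕ → Ω → ℕ) (hTm : ∀ k, Measurable (T k))
    (hindep : ProbabilityTheory.iIndepFun (m := fun _ => ⊤) T μ)
    (p : ℝ) (hp0 : 0 < p) (hp1 : p < 1)
    (hgeom : ∀ k, ∀ j : ℕ, 1 ≤ j →
      μ {ω | T k ω = j} = ENNReal.ofReal (p ^ (j - 1) * (1 - p)))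
    (δ : ℝ) (hδ0 : 0 < δ) (hδ1 : δ < 1)
    (t lam : ℝ) (ht : 0 < t) (hlam : 0 < lam) (hlp : Real.exp lam * p ≤ 1/2) :
    μ {ω | ENNReal.ofReal t
            ≤ ∑' k : ℕ, ENNReal.ofReal ((1 - δ) ^ k * (T k ω : ℝ))}
      ≤ ENNReal.ofReal
          (Real.exp (-t * lam + lam / δ + (2 * p / (1 - p)) * (Real.exp lam - 1) / δ)) := by
  have h1δ0 : (0:ℝ) < 1 - δ := by linarith
  have h1δ1 : (1:ℝ) - δ < 1 := by linarith
  set c : ℝ := 2 * p / (1 - p) * ((Real.exp lam - 1) / lam) with hc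
  set C0 : ℝ := lam / δ + 2 * p / (1 - p) * (Real.exp lam - 1) / δ with hC0
  set X : ℕ → Ω → ℝ := fun k ω => (1 - δ) ^ k * (T k ω : ℝ) with hX
  have hwk0 : ∀ k : ℕ, (0:ℝ) < (1 - δ) ^ k := fun k => pow_pos h1δ0 k
  have hwk1 : ∀ k : ℕ, (1 - δ) ^ k ≤ 1 := fun k => pow_le_one₀ h1δ0.le h1δ1.le
  have hsk0 : ∀ k : ℕ, 0 < lam * (1 - δ) ^ k := fun k => mul_pos hlam (hwk0 k)
  have hskl : ∀ k : ℕ, lam * (1 - δ) ^ k ≤ lam := fun k => by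
    nlinarith [hwk1 k, hwk0 k]
  -- measurability
  have hXm : ∀ k, Measurable (X k) := by
    intro k
    exact (measurable_from_top.comp (hTm k)).const_mul _
  -- independence
  have hXindep : ProbabilityTheory.iIndepFun X μ := by
    exact hindep.comp (fun k (n : ℕ) => (1 - δ) ^ k * (n : ℝ))
      (fun k => measurable_from_top)
  -- per-coordinate facts
  have hzero : ∀ k, μ {ω | T k ω = 0} = 0 := fun k =>
    geom_zero (T k) (hTm k) hp0 hp1 (hgeom k)
  have hps : ∀ k : ℕ, p * Real.exp (lam * (1 - δ) ^ k) < 1 := by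
    intro k
    have h1 : Real.exp (lam * (1 - δ) ^ k) ≤ Real.exp lam := Real.exp_le_exp.mpr (hskl k)
    nlinarith [Real.exp_pos (lam * (1 - δ) ^ k)]
  have hGI := fun k => geom_integral (T k) (hTm k) hp0 hp1 (hgeom k) (hzero k) (hps k)
  have hfun : ∀ k : ℕ, (fun ω => Real.exp (lam * X k ω))
      = fun ω => Real.exp (lam * (1 - δ) ^ k * (T k ω : ℝ)) := by
    intro k; funext ω; simp only [hX]; ring_nf
  have hIntk : ∀ k : ℕ, Integrable (fun ω => Real.exp (lam * X k ω)) μ := by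
    intro k; rw [hfun k]; exact (hGI k).1
  -- bound on each mgf
  have hmgf : ∀ k : ℕ, ProbabilityTheory.mgf (X k) μ lam
      ≤ Real.exp ((1 + c) * (lam * (1 - δ) ^ k)) := by
    intro k
    have h1 : ProbabilityTheory.mgf (X k) μ lam
        = ∫ ω, Real.exp (lam * (1 - δ) ^ k * (T k ω : ℝ)) ∂μ := by
      rw [ProbabilityTheory.mgf, ← hfun k]
    rw [h1, (hGI k).2]
    have := key_ineq hp0 hp1 (hsk0 k) (hskl k) hlp
    calc (1 - p) * Real.exp (lam * (1 - δ) ^ k) / (1 - p * Real.exp (lam * (1 - δ) ^ k))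
        ≤ Real.exp (lam * (1 - δ) ^ k + 2 * p / (1 - p) * ((Real.exp lam - 1) / lam)
            * (lam * (1 - δ) ^ k)) := this
      _ = Real.exp ((1 + c) * (lam * (1 - δ) ^ k)) := by rw [hc]; ring_nf
  have hc0 : 0 ≤ c := by
    have h1 : (1:ℝ) ≤ Real.exp lam := by
      rw [← Real.exp_zero]; exact Real.exp_le_exp.mpr hlam.le
    have : 0 ≤ 2 * p / (1 - p) := div_nonneg (by linarith) (by linarith)
    have h2 : 0 ≤ (Real.exp lam - 1) / lam := div_nonneg (by linarith) hlam.le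
    exact mul_nonneg this h2
  -- the exponent identity
  have hCeq : (1 + c) * (lam / δ) = C0 := by
    have key : (Real.exp lam - 1) / lam * (lam / δ) = (Real.exp lam - 1) / δ := by
      rw [div_mul_div_comm, mul_comm lam δ, ← div_mul_div_comm,
        div_self hlam.ne', mul_one]
    calc (1 + c) * (lam / δ)
        = lam / δ + 2 * p / (1 - p) * ((Real.exp lam - 1) / lam * (lam / δ)) := by
          rw [hc]; ring
      _ = C0 := by rw [key, hC0]; ring
  -- partial geometric sums
  have hgeo : ∀ n : ℕ, ∑ i ∈ Finset.range n, (1 - δ) ^ i ≤ 1 / δ := by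
    intro n
    have hsummable : Summable (fun i : ℕ => (1 - δ) ^ i) :=
      summable_geometric_of_lt_one h1δ0.le h1δ1
    have h1 : ∑ i ∈ Finset.range n, (1 - δ) ^ i ≤ ∑' i : ℕ, (1 - δ) ^ i :=
      hsummable.sum_le_tsum _ (fun i _ => (hwk0 i).le)
    rw [tsum_geometric_of_lt_one h1δ0.le h1δ1] at h1
    calc ∑ i ∈ Finset.range n, (1 - δ) ^ i ≤ (1 - (1 - δ))⁻¹ := h1
      _ = 1 / δ := by rw [show (1 : ℝ) - (1 - δ) = δ by ring, one_div]
  -- Chernoff bound for each n and each t' ∈ (0, t)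
  have hcher : ∀ (t' : ℝ), t' ∈ Set.Ioo 0 t → ∀ n : ℕ,
      μ {ω | t' ≤ ∑ i ∈ Finset.range n, X i ω}
        ≤ ENNReal.ofReal (Real.exp (-lam * t' + C0)) := by
    intro t' ht' n
    have hS : Integrable (fun ω => Real.exp (lam * (∑ i ∈ Finset.range n, X i) ω)) μ :=
      ProbabilityTheory.iIndepFun.integrable_exp_mul_sum hXindep hXm
        (fun i _ => hIntk i)
    have hch := ProbabilityTheory.measure_ge_le_exp_mul_mgf (X := ∑ i ∈ Finset.range n, X i)
      (μ := μ) t' hlam.le hS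
    have hsum_mgf : ProbabilityTheory.mgf (∑ i ∈ Finset.range n, X i) μ lam
        = ∏ i ∈ Finset.range n, ProbabilityTheory.mgf (X i) μ lam :=
      ProbabilityTheory.iIndepFun.mgf_sum hXindep hXm (Finset.range n)
    have hprod : ∏ i ∈ Finset.range n, ProbabilityTheory.mgf (X i) μ lam
        ≤ Real.exp ((1 + c) * (lam / δ)) := by
      calc ∏ i ∈ Finset.range n, ProbabilityTheory.mgf (X i) μ lam
          ≤ ∏ i ∈ Finset.range n, Real.exp ((1 + c) * (lam * (1 - δ) ^ i)) :=
            Finset.prod_le_prod (fun i _ => ProbabilityTheory.mgf_nonneg)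
              (fun i _ => hmgf i)
        _ = Real.exp (∑ i ∈ Finset.range n, (1 + c) * (lam * (1 - δ) ^ i)) :=
            (Real.exp_sum _ _).symm
        _ ≤ Real.exp ((1 + c) * (lam / δ)) := by
            apply Real.exp_le_exp.mpr
            have h2 : ∑ i ∈ Finset.range n, (1 + c) * (lam * (1 - δ) ^ i)
                = (1 + c) * lam * ∑ i ∈ Finset.range n, (1 - δ) ^ i := by
              rw [Finset.mul_sum]; apply Finset.sum_congr rfl; intro i _; ring
            rw [h2]
            have h3 : 0 ≤ (1 + c) * lam := mul_nonneg (by linarith) hlam.le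
            calc (1 + c) * lam * ∑ i ∈ Finset.range n, (1 - δ) ^ i
                ≤ (1 + c) * lam * (1 / δ) := mul_le_mul_of_nonneg_left (hgeo n) h3
              _ = (1 + c) * (lam / δ) := by ring
    have hset : {ω | t' ≤ (∑ i ∈ Finset.range n, X i) ω}
        = {ω | t' ≤ ∑ i ∈ Finset.range n, X i ω} := by
      ext ω; simp [Finset.sum_apply]
    rw [hset] at hch
    have hfinal : (μ {ω | t' ≤ ∑ i ∈ Finset.range n, X i ω}).toReal
        ≤ Real.exp (-lam * t' + C0) := by
      calc (μ {ω | t' ≤ ∑ i ∈ Finset.range n, X i ω}).toReal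
          ≤ Real.exp (-lam * t') * ProbabilityTheory.mgf (∑ i ∈ Finset.range n, X i) μ lam :=
            hch
        _ ≤ Real.exp (-lam * t') * Real.exp ((1 + c) * (lam / δ)) := by
            apply mul_le_mul_of_nonneg_left _ (Real.exp_pos _).le
            rw [hsum_mgf]; exact hprod
        _ = Real.exp (-lam * t' + (1 + c) * (lam / δ)) := (Real.exp_add _ _).symm
        _ = Real.exp (-lam * t' + C0) := by rw [hCeq]
    calc μ {ω | t' ≤ ∑ i ∈ Finset.range n, X i ω}
        = ENNReal.ofReal (μ {ω | t' ≤ ∑ i ∈ Finset.range n, X i ω}).toReal :=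
          (ENNReal.ofReal_toReal (measure_ne_top μ _)).symm
      _ ≤ ENNReal.ofReal (Real.exp (-lam * t' + C0)) := ENNReal.ofReal_le_ofReal hfinal
  -- event inclusion and monotone limit in n
  have hbound : ∀ (t' : ℝ), t' ∈ Set.Ioo 0 t →
      μ {ω | ENNReal.ofReal t ≤ ∑' k : ℕ, ENNReal.ofReal ((1 - δ) ^ k * (T k ω : ℝ))}
        ≤ ENNReal.ofReal (Real.exp (-lam * t' + C0)) := by
    intro t' ht'
    set A : ℕ → Set Ω := fun n => {ω | t' ≤ ∑ i ∈ Finset.range n, X i ω} with hA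
    have hXnonneg : ∀ k ω, 0 ≤ X k ω := fun k ω =>
      mul_nonneg (hwk0 k).le (Nat.cast_nonneg _)
    have hsub : {ω | ENNReal.ofReal t
        ≤ ∑' k : ℕ, ENNReal.ofReal ((1 - δ) ^ k * (T k ω : ℝ))} ⊆ ⋃ n, A n := by
      intro ω hω
      have hlt : ENNReal.ofReal t' < ENNReal.ofReal t :=
        (ENNReal.ofReal_lt_ofReal_iff ht).mpr ht'.2
      have h1 : ENNReal.ofReal t'
          < ∑' k : ℕ, ENNReal.ofReal ((1 - δ) ^ k * (T k ω : ℝ)) :=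
        lt_of_lt_of_le hlt hω
      rw [ENNReal.tsum_eq_iSup_nat, lt_iSup_iff] at h1
      obtain ⟨n, hn⟩ := h1
      have h2 : ∑ i ∈ Finset.range n, ENNReal.ofReal ((1 - δ) ^ i * (T i ω : ℝ))
          = ENNReal.ofReal (∑ i ∈ Finset.range n, X i ω) :=
        (ENNReal.ofReal_sum_of_nonneg (fun i _ => hXnonneg i ω)).symm
      rw [h2] at hn
      have h3 : t' < ∑ i ∈ Finset.range n, X i ω :=
        (ENNReal.ofReal_lt_ofReal_iff_of_nonneg ht'.1.le).mp hn
      exact Set.mem_iUnion.mpr ⟨n, h3.le⟩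
    have hmono : Monotone A := by
      intro m n hmn ω hω
      exact le_trans hω (Finset.sum_le_sum_of_subset_of_nonneg
        (Finset.range_subset_range.mpr hmn) (fun i _ _ => hXnonneg i ω))
    calc μ {ω | ENNReal.ofReal t
            ≤ ∑' k : ℕ, ENNReal.ofReal ((1 - δ) ^ k * (T k ω : ℝ))}
        ≤ μ (⋃ n, A n) := measure_mono hsub
      _ = ⨆ n, μ (A n) := hmono.directed_le.measure_iUnion
      _ ≤ ENNReal.ofReal (Real.exp (-lam * t' + C0)) := iSup_le (fun n => hcher t' ht' n)
  -- limit t' → t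
  have hcont : Continuous fun t' : ℝ => ENNReal.ofReal (Real.exp (-lam * t' + C0)) :=
    ENNReal.continuous_ofReal.comp (Real.continuous_exp.comp (by continuity))
  have hlim : Filter.Tendsto (fun t' : ℝ => ENNReal.ofReal (Real.exp (-lam * t' + C0)))
      (nhdsWithin t (Set.Iio t)) (nhds (ENNReal.ofReal (Real.exp (-lam * t + C0)))) :=
    (hcont.tendsto t).mono_left nhdsWithin_le_nhds
  have hev : ∀ᶠ t' in nhdsWithin t (Set.Iio t),
      μ {ω | ENNReal.ofReal t
          ≤ ∑' k : ℕ, ENNReal.ofReal ((1 - δ) ^ k * (T k ω : ℝ))}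
        ≤ ENNReal.ofReal (Real.exp (-lam * t' + C0)) :=
    Filter.eventually_of_mem (Ioo_mem_nhdsLT_of_mem ⟨ht, le_refl t⟩)
      (fun t' ht' => hbound t' ht')
  have hfin := ge_of_tendsto hlim hev
  have hexp : -t * lam + lam / δ + 2 * p / (1 - p) * (Real.exp lam - 1) / δ
      = -lam * t + C0 := by rw [hC0]; ring
  rw [hexp]
  exact hfin
end

section
/- Let M be a random variable with |M| ≤ 1 a.s. and P(|M| = 1) = 0, and for 0 < δ < 1 set p_δ = P(1-δ ≤ |M| ≤ 1). Let (M_k, Q_k) be i.i.d. copies of (M, Q) with |Q| ≤ q a.s. (q > 0), and let R be a random variable satisfying R =_d MR + Q with (M,Q) independent of R. Then for all sufficiently large x, P(|R| > x) ≤ exp((x/(4q)) · ln p_{2q/x}). -/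
open MeasureTheory Filter
open scoped ENNReal NNReal Topology

private lemma rpow_le_of_le_pow {p c : ℝ} (hp : 0 ≤ p) (hc : 0 ≤ c) {k : ℕ} (hk : k ≠ 0)
    (h : p ≤ c ^ k) : p ^ (((k : ℕ) : ℝ))⁻¹ ≤ c := by
  have h2 := Real.rpow_le_rpow hp h (by positivity : (0:ℝ) ≤ ((k:ℝ))⁻¹)
  rwa [← Real.rpow_natCast c k, ← Real.rpow_mul hc,
    mul_inv_cancel₀ (by exact_mod_cast hk), Real.rpow_one] at h2

set_option maxHeartbeats 2000000 in
private lemma key_analysis (f : ℕ → ℝ → ℝ) (p δ n C : ℝ)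
    (hp0 : 0 < p) (hple : p ≤ 1/10000)
    (hδ0 : 0 < δ) (hδn : n * δ = 1) (hn8 : 8 ≤ n)
    (hf1 : ∀ i u, f i u ≤ 1)
    (hdecay : ∀ i u, 1 ≤ u → f i u ≤ C / u)
    (hrec : ∀ i u, 1 ≤ u → f i u ≤ p * f (i+1) (u-1) + (1-p) * f (i+1) ((u-1)/(1-δ))) :
    f 0 (2*n) ≤ p ^ (n/2 : ℝ) := by
  have hp1 : p < 1 := lt_of_le_of_lt hple (by norm_num)
  have hδ1 : δ ≤ 1/8 := by nlinarith
  set a : ℝ := n/8 with ha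
  set G : ℝ → ℝ := fun u => p ^ ((2/3)*(u - n - a)) with hG
  set B : ℝ := p ^ (-(2/3) : ℝ) with hB
  have hrpadd : ∀ y z : ℝ, p ^ y * p ^ z = p ^ (y + z) := fun y z => (Real.rpow_add hp0 y z).symm
  have hGpos : ∀ u, 0 < G u := fun u => Real.rpow_pos_of_pos hp0 _
  have hBpos : 0 < B := Real.rpow_pos_of_pos hp0 _
  have hGanti : ∀ u v, u ≤ v → G v ≤ G u := by
    intro u v huv
    exact Real.rpow_le_rpow_of_exponent_ge hp0 hp1.le (by nlinarith)
  -- numeric bound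
  have hθ : p ^ ((1:ℝ)/3) + p ^ ((1:ℝ)/12) ≤ 13/25 := by
    have h3 : p ^ ((1:ℝ)/3) ≤ 1/20 := by
      have h := rpow_le_of_le_pow hp0.le (by norm_num : (0:ℝ) ≤ 1/20) (k := 3) (by norm_num)
        (show p ≤ (1/20:ℝ)^3 by norm_num; linarith)
      have e : (((3:ℕ):ℝ))⁻¹ = (1:ℝ)/3 := by norm_num
      rwa [e] at h
    have h12 : p ^ ((1:ℝ)/12) ≤ 47/100 := by
      have h := rpow_le_of_le_pow hp0.le (by norm_num : (0:ℝ) ≤ 47/100) (k := 12) (by norm_num)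
        (show p ≤ (47/100:ℝ)^12 by norm_num; linarith)
      have e : (((12:ℕ):ℝ))⁻¹ = (1:ℝ)/12 := by norm_num
      rwa [e] at h
    linarith
  -- supersolution property
  have hshift : ∀ u, n + a ≤ u → u + 1/8 ≤ (u-1)/(1-δ) := by
    intro u hu
    rw [le_div_iff₀ (by linarith : (0:ℝ) < 1 - δ)]
    have hδu : 9/8 ≤ δ * u := by nlinarith
    nlinarith
  have hsuper : ∀ u, n + a ≤ u →
      p * G (u-1) + (1-p) * G ((u-1)/(1-δ)) ≤ (13/25) * G u := by
    intro u hu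
    have e1 : p * G (u-1) = p ^ ((1:ℝ)/3) * G u := by
      simp only [hG]
      calc p * p ^ ((2:ℝ)/3*(u-1 - n - a))
          = p ^ (1:ℝ) * p ^ ((2:ℝ)/3*(u-1 - n - a)) := by rw [Real.rpow_one]
        _ = p ^ (1 + (2:ℝ)/3*(u-1 - n - a)) := hrpadd _ _
        _ = p ^ ((1:ℝ)/3 + (2:ℝ)/3*(u - n - a)) := by ring_nf
        _ = p ^ ((1:ℝ)/3) * p ^ ((2:ℝ)/3*(u - n - a)) := (hrpadd _ _).symm
    have e2 : G ((u-1)/(1-δ)) ≤ p ^ ((1:ℝ)/12) * G u := by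
      have h1 : G ((u-1)/(1-δ)) ≤ G (u + 1/8) := hGanti _ _ (hshift u hu)
      have e3 : G (u + 1/8) = p ^ ((1:ℝ)/12) * G u := by
        simp only [hG]
        calc p ^ ((2:ℝ)/3*(u + 1/8 - n - a))
            = p ^ ((1:ℝ)/12 + (2:ℝ)/3*(u - n - a)) := by ring_nf
          _ = p ^ ((1:ℝ)/12) * p ^ ((2:ℝ)/3*(u - n - a)) := (hrpadd _ _).symm
      rw [← e3]; exact h1
    have h2 : (1-p) * G ((u-1)/(1-δ)) ≤ G ((u-1)/(1-δ)) := by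
      nlinarith [hGpos ((u-1)/(1-δ))]
    have h4 : (1-p) * G ((u-1)/(1-δ)) ≤ p ^ ((1:ℝ)/12) * G u := le_trans h2 e2
    have h5 : (p ^ ((1:ℝ)/3) + p ^ ((1:ℝ)/12)) * G u ≤ (13/25) * G u :=
      mul_le_mul_of_nonneg_right hθ (hGpos u).le
    calc p * G (u-1) + (1-p) * G ((u-1)/(1-δ))
        ≤ p ^ ((1:ℝ)/3) * G u + p ^ ((1:ℝ)/12) * G u := by rw [e1]; linarith
      _ = (p ^ ((1:ℝ)/3) + p ^ ((1:ℝ)/12)) * G u := by ring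
      _ ≤ (13/25) * G u := h5
  have hB1 : ∀ u, u ≤ n + a + 1 → 1 ≤ B * G u := by
    intro u hu
    simp only [hB, hG]
    rw [hrpadd]
    exact Real.one_le_rpow_of_pos_of_le_one_of_nonpos hp0 hp1.le (by linarith)
  have hfin : B * G (2*n) ≤ p ^ (n/2 : ℝ) := by
    simp only [hB, hG]
    rw [hrpadd]
    exact Real.rpow_le_rpow_of_exponent_ge hp0 hp1.le (by nlinarith)
  clear_value G B a
  clear hG hB hrpadd
  -- the sSup comparison argument
  set V : Set ℝ := {v : ℝ | ∃ i u, n + a ≤ u ∧ v = f i u - B * G u} with hV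
  have hVne : V.Nonempty := ⟨f 0 (n+a) - B * G (n+a), 0, n+a, le_refl _, rfl⟩
  have hVbdd : BddAbove V := by
    refine ⟨1, ?_⟩
    rintro v ⟨i, u, hu, rfl⟩
    have h6 := hf1 i u
    nlinarith [hGpos u]
  set W : ℝ := sSup V with hW
  have hWle : ∀ ε : ℝ, 0 < ε → W ≤ ε := by
    intro ε hε
    set U : ℝ := max (n+a+1) ((|C|+1)/ε) with hU
    have hU1 : n + a + 1 ≤ U := le_max_left _ _
    have hUbig : ∀ i u, U ≤ u → f i u ≤ ε := by
      intro i u hu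
      have hu1 : (1:ℝ) ≤ u := by
        have : n + a + 1 ≤ u := le_trans hU1 hu
        nlinarith
      have h1 := hdecay i u hu1
      have h2 : (|C|+1)/ε ≤ u := le_trans (le_max_right _ _) hu
      have hu0 : (0:ℝ) < u := by linarith
      have h3 : C / u ≤ |C| / u := by gcongr; exact le_abs_self C
      have h4 : |C| / u ≤ ε := by
        rw [div_le_iff₀ hu0]
        rw [div_le_iff₀ hε] at h2
        nlinarith [abs_nonneg C]
      linarith
    set c : ℝ := (12/25) * (B * G U) with hc
    have hc0 : 0 < c := by
      rw [hc]
      have := hGpos U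
      nlinarith
    have hclaim : ∀ v ∈ V, v ≤ max ε (W - c) := by
      rintro v ⟨i, u, hu, rfl⟩
      by_cases hUu : U ≤ u
      · refine le_trans ?_ (le_max_left _ _)
        have h7 := hUbig i u hUu
        nlinarith [hGpos u]
      push_neg at hUu
      by_cases hu1 : u < n + a + 1
      · refine le_trans ?_ (le_max_left _ _)
        have h8 := hB1 u hu1.le
        have h9 := hf1 i u
        linarith
      push_neg at hu1
      refine le_trans ?_ (le_max_right _ _)
      have h1 : (1:ℝ) ≤ u := by nlinarith
      have hr := hrec i u h1
      have m1 : f (i+1) (u-1) ≤ W + B * G (u-1) := by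
        have := le_csSup hVbdd
          (show f (i+1) (u-1) - B * G (u-1) ∈ V from ⟨i+1, u-1, by linarith, rfl⟩)
        linarith
      have hu' : n + a ≤ (u-1)/(1-δ) := by
        have := hshift u (by linarith)
        linarith
      have m2 : f (i+1) ((u-1)/(1-δ)) ≤ W + B * G ((u-1)/(1-δ)) := by
        have := le_csSup hVbdd
          (show f (i+1) ((u-1)/(1-δ)) - B * G ((u-1)/(1-δ)) ∈ V from
            ⟨i+1, (u-1)/(1-δ), hu', rfl⟩)
        linarith
      have hsup := hsuper u (by linarith)
      have hGU : G U ≤ G u := hGanti u U hUu.le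
      have t1 : p * f (i+1) (u-1) ≤ p * (W + B * G (u-1)) :=
        mul_le_mul_of_nonneg_left m1 hp0.le
      have t2 : (1-p) * f (i+1) ((u-1)/(1-δ)) ≤ (1-p) * (W + B * G ((u-1)/(1-δ))) :=
        mul_le_mul_of_nonneg_left m2 (by linarith)
      have t3 : B * (p * G (u-1) + (1-p) * G ((u-1)/(1-δ))) ≤ B * ((13/25) * G u) :=
        mul_le_mul_of_nonneg_left hsup hBpos.le
      have t4 : B * G U ≤ B * G u := mul_le_mul_of_nonneg_left hGU hBpos.le
      calc f i u - B * G u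
          ≤ (p * f (i+1) (u-1) + (1-p) * f (i+1) ((u-1)/(1-δ))) - B * G u := by linarith
        _ ≤ (p * (W + B * G (u-1)) + (1-p) * (W + B * G ((u-1)/(1-δ)))) - B * G u := by
            linarith
        _ = W + B * (p * G (u-1) + (1-p) * G ((u-1)/(1-δ))) - B * G u := by ring
        _ ≤ W + B * ((13/25) * G u) - B * G u := by linarith
        _ = W - (12/25) * (B * G u) := by ring
        _ ≤ W - (12/25) * (B * G U) := by linarith
        _ = W - c := by rw [hc]
    have hWmax : W ≤ max ε (W - c) := csSup_le hVne hclaim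
    rcases le_or_gt W ε with h | h
    · exact h
    · exact absurd hWmax (not_le.mpr (max_lt h (by linarith)))
  have hW0 : W ≤ 0 := by
    by_contra h
    push_neg at h
    have := hWle (W/2) (by linarith)
    linarith
  have hmem : f 0 (2*n) - B * G (2*n) ≤ W :=
    le_csSup hVbdd ⟨0, 2*n, by nlinarith, rfl⟩
  linarith

/-- main upper bound: if `|M| ≤ 1` a.s., `|M|` has no atom at `1`,
`|Q| ≤ q` a.s., and `R = ∑_{k≥1} Q_k ∏_{j=1}^{k-1} M_j` for i.i.d. copies
`(M_k, Q_k)` of `(M, Q)`, then for all sufficiently large `x`,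
`P(|R| > x) ≤ exp((x/(4q)) ln p_{2q/x})` where `p_δ = P(1-δ ≤ |M| ≤ 1)`. -/
theorem stmt_11 {Ω : Type*} [MeasureSpace Ω] (μ : Measure Ω) [IsProbabilityMeasure μ]
    (M Q : ℕ → Ω → ℝ) (hMm : ∀ k, Measurable (M k)) (hQm : ∀ k, Measurable (Q k))
    (hindep : ProbabilityTheory.iIndepFun
      (fun k ω => (M k ω, Q k ω)) μ)
    (hident : ∀ k, ProbabilityTheory.IdentDistrib
      (fun ω => (M k ω, Q k ω)) (fun ω => (M 0 ω, Q 0 ω)) μ μ)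
    (q : ℝ) (hq : 0 < q)
    (hM1 : ∀ᵐ ω ∂μ, |M 0 ω| ≤ 1)
    (hnoatom : μ {ω | |M 0 ω| = 1} = 0)
    (hQq : ∀ᵐ ω ∂μ, |Q 0 ω| ≤ q)
    (R : Ω → ℝ) (hR : ∀ ω, R ω = ∑' k : ℕ, Q k ω * ∏ j ∈ Finset.range k, M j ω) :
    ∃ x₀ : ℝ, ∀ x : ℝ, x₀ ≤ x →
      (μ {ω | x < |R ω|}).toReal
        ≤ Real.exp ((x / (4 * q))
            * Real.log ((μ {ω | 1 - 2 * q / x ≤ |M 0 ω| ∧ |M 0 ω| ≤ 1}).toReal)) := by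
  classical
  set pair : ℕ → Ω → ℝ × ℝ := fun k ω => (M k ω, Q k ω) with hpair
  have hpairm : ∀ k, Measurable (pair k) := fun k => (hMm k).prodMk (hQm k)
  set X : ℕ → Ω → ℝ≥0∞ := fun j ω => (‖M j ω‖₊ : ℝ≥0∞) with hXdef
  have hXm : ∀ j, Measurable (X j) := fun j => (hMm j).nnnorm.coe_nnreal_ennreal
  have hXeq : ∀ j ω, X j ω = ENNReal.ofReal |M j ω| := by
    intro j ω
    rw [hXdef]
    exact Real.enorm_eq_ofReal_abs _
  set T : ℕ → Ω → ℝ≥0∞ := fun i ω => ∑' k, ∏ j ∈ Finset.range k, X (i+j) ω with hTdef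
  -- pointwise recursion
  have hTrec : ∀ i ω, T i ω = 1 + X i ω * T (i+1) ω := by
    intro i ω
    rw [hTdef]
    simp only
    rw [tsum_eq_zero_add' ENNReal.summable]
    have h0 : (∏ j ∈ Finset.range 0, X (i+j) ω) = 1 := Finset.prod_range_zero _
    rw [h0]
    congr 1
    rw [← ENNReal.tsum_mul_left]
    apply tsum_congr
    intro k
    rw [Finset.prod_range_succ', mul_comm]
    have e0 : X (i+0) ω = X i ω := by norm_num
    rw [e0]
    congr 1
    apply Finset.prod_congr rfl
    intro j _
    have e1 : i + (j+1) = i + 1 + j := by omega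
    rw [e1]
  -- σ-algebras
  set S : ℕ → MeasurableSpace Ω :=
    fun i => ⨆ j ∈ Set.Ici i, MeasurableSpace.comap (pair j) inferInstance with hSdef
  have hcomap_le : ∀ j, MeasurableSpace.comap (pair j) inferInstance
      ≤ (inferInstance : MeasurableSpace Ω) := fun j => (hpairm j).comap_le
  have hSle : ∀ i, S i ≤ (inferInstance : MeasurableSpace Ω) :=
    fun i => iSup₂_le fun j _ => hcomap_le j
  have hpairS : ∀ i j, i ≤ j → Measurable[S i] (pair j) := by
    intro i j hij
    have h1 : Measurable[MeasurableSpace.comap (pair j) inferInstance] (pair j) :=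
      Measurable.of_comap_le le_rfl
    exact h1.mono (le_iSup₂ (f := fun (j : ℕ) (_ : j ∈ Set.Ici i) =>
      MeasurableSpace.comap (pair j) inferInstance) j hij) le_rfl
  have hXS : ∀ i j, i ≤ j → Measurable[S i] (X j) := fun i j hij =>
    (measurable_fst.nnnorm.coe_nnreal_ennreal).comp (hpairS i j hij)
  have hTS : ∀ i, Measurable[S i] (T i) := by
    intro i
    apply Measurable.ennreal_tsum
    intro k
    exact Finset.measurable_prod _ (fun j _ => hXS i (i+j) (Nat.le_add_right _ _))
  have hTm : ∀ i, Measurable (T i) := fun i => (hTS i).mono (hSle i) le_rfl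
  -- independence
  have hiI : ProbabilityTheory.iIndep
      (fun k => MeasurableSpace.comap (pair k) inferInstance) μ := by
    rwa [ProbabilityTheory.iIndepFun_iff_iIndep] at hindep
  have hIndep : ∀ i (s t : Set Ω),
      MeasurableSet[MeasurableSpace.comap (pair i) inferInstance] s →
      MeasurableSet[S (i+1)] t → μ (s ∩ t) = μ s * μ t := by
    intro i s t hs ht
    have h := ProbabilityTheory.indep_biSup_compl hcomap_le hiI {i}
    rw [ProbabilityTheory.Indep_iff] at h
    apply h
    · have hle : MeasurableSpace.comap (pair i) inferInstance
          ≤ ⨆ j ∈ ({i} : Set ℕ), MeasurableSpace.comap (pair j) inferInstance :=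
        le_iSup₂ (f := fun (j : ℕ) (_ : j ∈ ({i} : Set ℕ)) =>
          MeasurableSpace.comap (pair j) inferInstance) i rfl
      exact hle s hs
    · have hle : S (i+1) ≤ ⨆ j ∈ ({i} : Set ℕ)ᶜ,
          MeasurableSpace.comap (pair j) inferInstance := by
        rw [hSdef]
        apply iSup₂_le
        intro j hj
        simp only [Set.mem_Ici] at hj
        exact le_iSup₂ (f := fun (j : ℕ) (_ : j ∈ ({i} : Set ℕ)ᶜ) =>
          MeasurableSpace.comap (pair j) inferInstance) j
          (by simp only [Set.mem_compl_iff, Set.mem_singleton_iff]; omega)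
      exact hle t ht
  -- identical distribution consequences
  have hmeaseq : ∀ (k : ℕ) (B : Set (ℝ × ℝ)), MeasurableSet B →
      μ (pair k ⁻¹' B) = μ (pair 0 ⁻¹' B) := fun k B hB => (hident k).measure_mem_eq hB
  have hM1' : ∀ i, μ {ω | 1 < |M i ω|} = 0 := by
    intro i
    have h1 : μ {ω | 1 < |M i ω|} = μ {ω | 1 < |M 0 ω|} :=
      hmeaseq i {r : ℝ × ℝ | 1 < |r.1|} (measurableSet_lt measurable_const measurable_fst.abs)
    rw [h1]
    rw [ae_iff] at hM1
    simpa [not_le] using hM1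
  have hQ' : ∀ k, μ {ω | q < |Q k ω|} = 0 := by
    intro k
    have h1 : μ {ω | q < |Q k ω|} = μ {ω | q < |Q 0 ω|} :=
      hmeaseq k {r : ℝ × ℝ | q < |r.2|} (measurableSet_lt measurable_const measurable_snd.abs)
    rw [h1]
    rw [ae_iff] at hQq
    simpa [not_le] using hQq
  have hQae : ∀ᵐ ω ∂μ, ∀ k, |Q k ω| ≤ q := by
    rw [ae_all_iff]
    intro k
    rw [ae_iff]
    simpa [not_le] using hQ' k
  -- expectation of X and T
  set beta : ℝ≥0∞ := ∫⁻ ω, X 0 ω ∂μ with hbeta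
  have haeM1 : ∀ᵐ ω ∂μ, |M 0 ω| < 1 := by
    have h2 : ∀ᵐ ω ∂μ, ¬ (|M 0 ω| = 1) := by
      rw [ae_iff]
      simpa using hnoatom
    filter_upwards [hM1, h2] with ω hω1 hω2
    exact lt_of_le_of_ne hω1 hω2
  have hbeta1 : beta < 1 := by
    set A : ℕ → Set Ω := fun m => {ω | |M 0 ω| ≤ 1 - 1/(m+1)} with hA
    have hAm : ∀ m, MeasurableSet (A m) :=
      fun m => measurableSet_le (hMm 0).abs measurable_const
    have hcover : {ω | |M 0 ω| < 1} ⊆ ⋃ m, A m := by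
      intro ω hω
      simp only [Set.mem_setOf_eq] at hω
      obtain ⟨m, hm⟩ := exists_nat_one_div_lt (by linarith : (0:ℝ) < 1 - |M 0 ω|)
      exact Set.mem_iUnion.mpr ⟨m, by simp only [hA, Set.mem_setOf_eq]; linarith⟩
    have hone : (1:ℝ≥0∞) ≤ μ {ω | |M 0 ω| < 1} := by
      have hc : μ {ω | |M 0 ω| < 1}ᶜ = 0 := by
        rw [ae_iff] at haeM1
        simpa [not_lt, Set.compl_setOf] using haeM1
      have h3 := measure_add_measure_compl (μ := μ) (s := {ω | |M 0 ω| < 1})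
        (measurableSet_lt (hMm 0).abs measurable_const)
      rw [hc, add_zero, measure_univ] at h3
      exact h3.ge
    have hex : ∃ m, μ (A m) ≠ 0 := by
      by_contra hno
      push_neg at hno
      have h4 : μ (⋃ m, A m) = 0 := measure_iUnion_null hno
      have h2 : μ {ω | |M 0 ω| < 1} = 0 := measure_mono_null hcover h4
      rw [h2] at hone
      simp at hone
    obtain ⟨m, hm⟩ := hex
    set t : ℝ := 1 - 1/(m+1) with ht
    have ht0 : 0 ≤ t := by
      rw [ht]
      have h1 : 1/((m:ℝ)+1) ≤ 1 := by
        rw [div_le_one (by positivity)]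
        simp
      linarith
    have ht1 : t < 1 := by
      rw [ht]
      have : 0 < 1/((m:ℝ)+1) := by positivity
      linarith
    have hsplit : beta = (∫⁻ ω in A m, X 0 ω ∂μ) + ∫⁻ ω in (A m)ᶜ, X 0 ω ∂μ :=
      (lintegral_add_compl (X 0) (hAm m)).symm
    have hb1 : (∫⁻ ω in A m, X 0 ω ∂μ) ≤ ENNReal.ofReal t * μ (A m) := by
      calc (∫⁻ ω in A m, X 0 ω ∂μ) ≤ ∫⁻ _ in A m, ENNReal.ofReal t ∂μ := by
            apply lintegral_mono_ae
            refine (ae_restrict_iff' (hAm m)).mpr (ae_of_all _ fun ω hω => ?_)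
            rw [hXeq]
            exact ENNReal.ofReal_le_ofReal hω
        _ = ENNReal.ofReal t * μ (A m) := by
            rw [setLIntegral_const]
    have hb2 : (∫⁻ ω in (A m)ᶜ, X 0 ω ∂μ) ≤ μ (A m)ᶜ := by
      calc (∫⁻ ω in (A m)ᶜ, X 0 ω ∂μ) ≤ ∫⁻ _ in (A m)ᶜ, 1 ∂μ := by
            apply lintegral_mono_ae
            apply ae_restrict_of_ae
            filter_upwards [hM1] with ω hω
            rw [hXeq]
            calc ENNReal.ofReal |M 0 ω| ≤ ENNReal.ofReal 1 := ENNReal.ofReal_le_ofReal hω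
              _ = 1 := ENNReal.ofReal_one
        _ = μ (A m)ᶜ := by rw [setLIntegral_const, one_mul]
    have hstrict : ENNReal.ofReal t * μ (A m) < μ (A m) := by
      have h1 : ENNReal.ofReal t < 1 := by
        rw [← ENNReal.ofReal_one]
        exact (ENNReal.ofReal_lt_ofReal_iff (by norm_num)).mpr ht1
      calc ENNReal.ofReal t * μ (A m) < 1 * μ (A m) := by
            exact ENNReal.mul_lt_mul_left hm (measure_ne_top μ _) h1
        _ = μ (A m) := one_mul _
    calc beta ≤ ENNReal.ofReal t * μ (A m) + μ (A m)ᶜ := by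
          rw [hsplit]; exact add_le_add hb1 hb2
      _ < μ (A m) + μ (A m)ᶜ :=
          ENNReal.add_lt_add_right (measure_ne_top μ _) hstrict
      _ = 1 := by rw [measure_add_measure_compl (hAm m), measure_univ]
  have hEX : ∀ j, ∫⁻ ω, X j ω ∂μ = beta := by
    intro j
    have h := ((hident j).comp
      (measurable_fst.nnnorm.coe_nnreal_ennreal)).lintegral_eq
    simpa [Function.comp] using h
  have hEprod : ∀ i k, ∫⁻ ω, (∏ j ∈ Finset.range k, X (i+j) ω) ∂μ = beta ^ k := by
    intro i k
    induction k with
    | zero => simp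
    | succ k ih =>
      have hprodmeas : Measurable (fun ω => ∏ j ∈ Finset.range k, X (i+j) ω) :=
        Finset.measurable_prod _ (fun j _ => hXm (i+j))
      have hFS : Measurable[⨆ j ∈ Set.Iio (i+k), MeasurableSpace.comap (pair j) inferInstance]
          (fun ω => ∏ j ∈ Finset.range k, X (i+j) ω) := by
        apply Finset.measurable_prod
        intro j hj
        have hjk : i + j ∈ Set.Iio (i+k) := by
          simp only [Set.mem_Iio]
          have := Finset.mem_range.mp hj
          omega
        have h1 : Measurable[MeasurableSpace.comap (pair (i+j)) inferInstance] (pair (i+j)) :=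
          Measurable.of_comap_le le_rfl
        exact (measurable_fst.nnnorm.coe_nnreal_ennreal).comp
          (h1.mono (le_iSup₂ (f := fun (l : ℕ) (_ : l ∈ Set.Iio (i+k)) =>
            MeasurableSpace.comap (pair l) inferInstance) (i+j) hjk) le_rfl)
      have hind : ProbabilityTheory.IndepFun
          (fun ω => ∏ j ∈ Finset.range k, X (i+j) ω) (X (i+k)) μ := by
        rw [ProbabilityTheory.IndepFun_iff_Indep]
        have h := ProbabilityTheory.indep_biSup_compl hcomap_le hiI (Set.Iio (i+k))
        refine ProbabilityTheory.indep_of_indep_of_le_left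
          (ProbabilityTheory.indep_of_indep_of_le_right h ?_) ?_
        · -- comap (X (i+k)) ≤ ⨆ j ∈ (Iio (i+k))ᶜ ...
          have h1 : MeasurableSpace.comap (X (i+k)) inferInstance
              ≤ MeasurableSpace.comap (pair (i+k)) inferInstance := by
            rw [show X (i+k) = (fun r : ℝ × ℝ => ((‖r.1‖₊ : ℝ≥0∞))) ∘ pair (i+k) from rfl]
            rw [← MeasurableSpace.comap_comp]
            exact MeasurableSpace.comap_mono
              ((measurable_fst.nnnorm.coe_nnreal_ennreal).comap_le)
          refine le_trans h1 ?_
          exact le_iSup₂ (f := fun (l : ℕ) (_ : l ∈ (Set.Iio (i+k))ᶜ) =>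
            MeasurableSpace.comap (pair l) inferInstance) (i+k) (by simp)
        · exact (hFS).comap_le
      calc ∫⁻ ω, (∏ j ∈ Finset.range (k+1), X (i+j) ω) ∂μ
          = ∫⁻ ω, (∏ j ∈ Finset.range k, X (i+j) ω) * X (i+k) ω ∂μ := by
            apply lintegral_congr
            intro ω
            exact Finset.prod_range_succ _ _
        _ = (∫⁻ ω, (∏ j ∈ Finset.range k, X (i+j) ω) ∂μ) * ∫⁻ ω, X (i+k) ω ∂μ :=
            ProbabilityTheory.lintegral_mul_eq_lintegral_mul_lintegral_of_indepFun''
              hprodmeas.aemeasurable (hXm (i+k)).aemeasurable hind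
        _ = beta ^ (k+1) := by rw [ih, hEX (i+k), pow_succ]
  have hET : ∀ i, ∫⁻ ω, T i ω ∂μ ≤ (1 - beta)⁻¹ := by
    intro i
    rw [hTdef]
    simp only
    rw [lintegral_tsum (fun k =>
      (Finset.measurable_prod _ (fun j _ => hXm (i+j))).aemeasurable)]
    calc (∑' k, ∫⁻ ω, (∏ j ∈ Finset.range k, X (i+j) ω) ∂μ)
        = ∑' k : ℕ, beta ^ k := tsum_congr (fun k => hEprod i k)
      _ = (1 - beta)⁻¹ := ENNReal.tsum_geometric beta
      _ ≤ (1 - beta)⁻¹ := le_rfl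
  have hbinvtop : (1 - beta)⁻¹ ≠ ⊤ := by
    rw [ENNReal.inv_ne_top]
    rw [ne_eq, tsub_eq_zero_iff_le]
    exact not_le.mpr hbeta1
  set Creal : ℝ := ((1 - beta)⁻¹).toReal with hCreal
  -- the tail probability function
  set f : ℕ → ℝ → ℝ := fun i u => (μ {ω | ENNReal.ofReal u < T i ω}).toReal with hf
  have hf1 : ∀ i u, f i u ≤ 1 := by
    intro i u
    rw [hf]
    exact ENNReal.toReal_le_of_le_ofReal (by norm_num) (by simpa using prob_le_one)
  have hdecay : ∀ i u, 1 ≤ u → f i u ≤ Creal / u := by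
    intro i u hu
    have hu0 : (0:ℝ) < u := by linarith
    have h1 : μ {ω | ENNReal.ofReal u < T i ω} ≤ (1 - beta)⁻¹ / ENNReal.ofReal u := by
      calc μ {ω | ENNReal.ofReal u < T i ω} ≤ μ {ω | ENNReal.ofReal u ≤ T i ω} :=
            measure_mono (fun ω (hω : ENNReal.ofReal u < T i ω) =>
              (le_of_lt hω : ENNReal.ofReal u ≤ T i ω))
        _ ≤ (∫⁻ ω, T i ω ∂μ) / ENNReal.ofReal u :=
            meas_ge_le_lintegral_div (hTm i).aemeasurable
              ((ENNReal.ofReal_pos.mpr hu0).ne') ENNReal.ofReal_ne_top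
        _ ≤ (1 - beta)⁻¹ / ENNReal.ofReal u := by
            gcongr
            exact hET i
    rw [hf]
    calc (μ {ω | ENNReal.ofReal u < T i ω}).toReal
        ≤ ((1 - beta)⁻¹ / ENNReal.ofReal u).toReal := by
          apply ENNReal.toReal_mono ?_ h1
          exact (ENNReal.div_lt_top hbinvtop ((ENNReal.ofReal_pos.mpr hu0).ne')).ne
      _ = Creal / u := by
          rw [ENNReal.toReal_div, ENNReal.toReal_ofReal hu0.le]
  -- choice of x₀
  set Ek : ℕ → Set Ω := fun k => {ω | 1 - 1/(k+1) ≤ |M 0 ω| ∧ |M 0 ω| ≤ 1} with hEk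
  have hEkm : ∀ k, MeasurableSet (Ek k) := by
    intro k
    apply MeasurableSet.inter
    · exact measurableSet_le measurable_const (hMm 0).abs
    · exact measurableSet_le (hMm 0).abs measurable_const
  have hEkanti : Antitone Ek := by
    intro k k' hkk' ω hω
    simp only [hEk, Set.mem_setOf_eq] at *
    obtain ⟨h1, h2⟩ := hω
    refine ⟨le_trans ?_ h1, h2⟩
    have h3 : 1/((k':ℝ)+1) ≤ 1/((k:ℝ)+1) := by
      apply one_div_le_one_div_of_le (by positivity)
      exact_mod_cast add_le_add_left (Nat.cast_le.mpr hkk') 1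
    linarith
  have hEkinter : (⋂ k, Ek k) ⊆ {ω | |M 0 ω| = 1} := by
    intro ω hω
    simp only [Set.mem_iInter, hEk, Set.mem_setOf_eq] at hω
    have h2 := (hω 0).2
    by_contra hne
    have hlt : |M 0 ω| < 1 := lt_of_le_of_ne h2 hne
    obtain ⟨m, hm⟩ := exists_nat_one_div_lt (by linarith : (0:ℝ) < 1 - |M 0 ω|)
    have := (hω m).1
    linarith
  have htend : Tendsto (μ ∘ Ek) atTop (𝓝 0) := by
    have h1 := tendsto_measure_iInter_atTop (μ := μ)
      (fun k => (hEkm k).nullMeasurableSet) hEkanti ⟨0, measure_ne_top μ _⟩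
    have h2 : μ (⋂ k, Ek k) = 0 := measure_mono_null hEkinter hnoatom
    rwa [h2] at h1
  have hev : ∀ᶠ k in atTop, (μ ∘ Ek) k < ENNReal.ofReal (1/10000) :=
    htend.eventually_lt_const (by simp [ENNReal.ofReal_pos])
  obtain ⟨k₀, hk₀⟩ := hev.exists
  refine ⟨max (16*q) (2*q*(k₀+1)), ?_⟩
  intro x hx
  have hx16 : 16*q ≤ x := le_trans (le_max_left _ _) hx
  have hxk : 2*q*(k₀+1) ≤ x := le_trans (le_max_right _ _) hx
  have hxpos : 0 < x := lt_of_lt_of_le (by positivity) hx16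
  set δ : ℝ := 2*q/x with hδdef
  have hδ0 : 0 < δ := by positivity
  set n : ℝ := x/(2*q) with hn
  have hδn : n * δ = 1 := by
    rw [hn, hδdef]
    field_simp
  have hn8 : 8 ≤ n := by
    rw [hn, le_div_iff₀ (by positivity)]
    linarith
  set P : ℝ≥0∞ := μ {ω | 1 - δ ≤ |M 0 ω| ∧ |M 0 ω| ≤ 1} with hP
  set p : ℝ := P.toReal with hpdef
  have hPtop : P ≠ ⊤ := measure_ne_top μ _
  have hple : p ≤ 1/10000 := by
    have hsub : {ω | 1 - δ ≤ |M 0 ω| ∧ |M 0 ω| ≤ 1} ⊆ Ek k₀ := by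
      intro ω hω
      obtain ⟨h1, h2⟩ := hω
      refine ⟨le_trans ?_ h1, h2⟩
      have hd : δ ≤ 1/((k₀:ℝ)+1) := by
        rw [hδdef, div_le_div_iff₀ hxpos (by positivity)]
        calc 2*q*((k₀:ℝ)+1) ≤ x := by exact_mod_cast hxk
          _ = 1 * x := (one_mul x).symm
      linarith
    have h1 : P ≤ ENNReal.ofReal (1/10000) := le_trans (measure_mono hsub) hk₀.le
    calc p ≤ (ENNReal.ofReal (1/10000)).toReal := ENNReal.toReal_mono ENNReal.ofReal_ne_top h1
      _ = 1/10000 := ENNReal.toReal_ofReal (by norm_num)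
  -- case split on p = 0
  rcases eq_or_ne P 0 with hP0 | hP0
  · have hz : p = 0 := by rw [hpdef, hP0]; simp
    rw [hz, Real.log_zero, mul_zero, Real.exp_zero]
    exact ENNReal.toReal_le_of_le_ofReal (by norm_num) (by simpa using prob_le_one)
  have hp0 : 0 < p := by
    rw [hpdef]
    exact ENNReal.toReal_pos hP0 hPtop
  -- the probabilistic recursion
  have hrec : ∀ i u, 1 ≤ u →
      f i u ≤ p * f (i+1) (u-1) + (1-p) * f (i+1) ((u-1)/(1-δ)) := by
    intro i u hu
    have hδ1 : δ < 1 := by nlinarith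
    set A1 : Set Ω := {ω | ENNReal.ofReal (u-1) < T (i+1) ω} with hA1
    set A2 : Set Ω := {ω | ENNReal.ofReal ((u-1)/(1-δ)) < T (i+1) ω} with hA2
    set L : Set Ω := {ω | 1 - δ ≤ |M i ω|} with hL
    have hLme : MeasurableSet L := measurableSet_le measurable_const (hMm i).abs
    have hincl : {ω | ENNReal.ofReal u < T i ω}
        ⊆ ((L ∩ A1) ∪ (Lᶜ ∩ A2)) ∪ {ω | 1 < |M i ω|} := by
      intro ω hω
      simp only [Set.mem_setOf_eq] at hω
      by_cases hM : |M i ω| ≤ 1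
      swap
      · exact Or.inr (by simpa using not_le.mp hM)
      left
      have hsplit : ENNReal.ofReal (u-1) < X i ω * T (i+1) ω := by
        have h1 : T i ω = 1 + X i ω * T (i+1) ω := hTrec i ω
        have h2 : ENNReal.ofReal u = 1 + ENNReal.ofReal (u-1) := by
          rw [← ENNReal.ofReal_one, ← ENNReal.ofReal_add (by norm_num) (by linarith)]
          norm_num
        rw [h1, h2] at hω
        exact (ENNReal.add_lt_add_iff_left (by norm_num : (1:ℝ≥0∞) ≠ ⊤)).mp hω
      have hXle1 : X i ω ≤ 1 := by
        rw [hXeq]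
        calc ENNReal.ofReal |M i ω| ≤ ENNReal.ofReal 1 := ENNReal.ofReal_le_ofReal hM
          _ = 1 := ENNReal.ofReal_one
      by_cases hLω : 1 - δ ≤ |M i ω|
      · refine Or.inl ⟨hLω, ?_⟩
        show ENNReal.ofReal (u-1) < T (i+1) ω
        calc ENNReal.ofReal (u-1) < X i ω * T (i+1) ω := hsplit
          _ ≤ 1 * T (i+1) ω := mul_le_mul_left hXle1 _
          _ = T (i+1) ω := one_mul _
      · refine Or.inr ⟨by simpa [hL] using hLω, ?_⟩
        push_neg at hLω
        have hXle : X i ω ≤ ENNReal.ofReal (1-δ) := by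
          rw [hXeq]
          exact ENNReal.ofReal_le_ofReal hLω.le
        have h3 : ENNReal.ofReal (u-1) < ENNReal.ofReal (1-δ) * T (i+1) ω :=
          lt_of_lt_of_le hsplit (mul_le_mul_left hXle _)
        have h4 : ENNReal.ofReal (u-1) / ENNReal.ofReal (1-δ) < T (i+1) ω := by
          rw [ENNReal.div_lt_iff
            (Or.inl (ENNReal.ofReal_pos.mpr (by linarith : (0:ℝ) < 1-δ)).ne')
            (Or.inl ENNReal.ofReal_ne_top)]
          rwa [mul_comm] at h3
        show ENNReal.ofReal ((u-1)/(1-δ)) < T (i+1) ω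
        rwa [ENNReal.ofReal_div_of_pos (by linarith : (0:ℝ) < 1-δ)]
    have hμle : μ {ω | ENNReal.ofReal u < T i ω} ≤ μ (L ∩ A1) + μ (Lᶜ ∩ A2) := by
      calc μ {ω | ENNReal.ofReal u < T i ω}
          ≤ μ (((L ∩ A1) ∪ (Lᶜ ∩ A2)) ∪ {ω | 1 < |M i ω|}) := measure_mono hincl
        _ ≤ μ ((L ∩ A1) ∪ (Lᶜ ∩ A2)) + μ {ω | 1 < |M i ω|} := measure_union_le _ _
        _ = μ ((L ∩ A1) ∪ (Lᶜ ∩ A2)) := by rw [hM1' i, add_zero]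
        _ ≤ μ (L ∩ A1) + μ (Lᶜ ∩ A2) := measure_union_le _ _
    have hLcomap : MeasurableSet[MeasurableSpace.comap (pair i) inferInstance] L :=
      ⟨{r : ℝ × ℝ | 1 - δ ≤ |r.1|},
        measurableSet_le measurable_const measurable_fst.abs, rfl⟩
    have hA1m : MeasurableSet[S (i+1)] A1 := hTS (i+1) measurableSet_Ioi
    have hA2m : MeasurableSet[S (i+1)] A2 := hTS (i+1) measurableSet_Ioi
    have e1 : μ (L ∩ A1) = μ L * μ A1 := hIndep i L A1 hLcomap hA1m
    have e2 : μ (Lᶜ ∩ A2) = μ Lᶜ * μ A2 := hIndep i Lᶜ A2 hLcomap.compl hA2m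
    have hLP : μ L = P := by
      have h1 : μ L = μ {ω | 1 - δ ≤ |M 0 ω|} :=
        hmeaseq i {r : ℝ × ℝ | 1 - δ ≤ |r.1|}
          (measurableSet_le measurable_const measurable_fst.abs)
      rw [h1, hP]
      apply le_antisymm
      · calc μ {ω | 1 - δ ≤ |M 0 ω|}
            ≤ μ ({ω | 1 - δ ≤ |M 0 ω| ∧ |M 0 ω| ≤ 1} ∪ {ω | 1 < |M 0 ω|}) := by
              apply measure_mono
              intro ω hω
              by_cases h2 : |M 0 ω| ≤ 1
              · exact Or.inl ⟨hω, h2⟩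
              · exact Or.inr (not_le.mp h2)
          _ ≤ μ {ω | 1 - δ ≤ |M 0 ω| ∧ |M 0 ω| ≤ 1} + μ {ω | 1 < |M 0 ω|} :=
              measure_union_le _ _
          _ = μ {ω | 1 - δ ≤ |M 0 ω| ∧ |M 0 ω| ≤ 1} := by rw [hM1' 0, add_zero]
      · exact measure_mono (fun ω hω => hω.1)
    have hLcP : μ Lᶜ = 1 - P := by
      rw [measure_compl hLme (measure_ne_top μ L), measure_univ, hLP]
    have hPle1 : P ≤ 1 := prob_le_one
    have hA1top : μ A1 ≠ ⊤ := measure_ne_top μ _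
    have hA2top : μ A2 ≠ ⊤ := measure_ne_top μ _
    have hfinal : μ {ω | ENNReal.ofReal u < T i ω} ≤ P * μ A1 + (1 - P) * μ A2 := by
      rw [← hLcP, ← hLP, ← e1, ← e2]
      exact hμle
    rw [hf]
    simp only
    calc (μ {ω | ENNReal.ofReal u < T i ω}).toReal
        ≤ (P * μ A1 + (1 - P) * μ A2).toReal := by
          apply ENNReal.toReal_mono ?_ hfinal
          exact ENNReal.add_ne_top.mpr
            ⟨ENNReal.mul_ne_top hPtop hA1top,
             ENNReal.mul_ne_top (by simp : (1:ℝ≥0∞) - P ≠ ⊤) hA2top⟩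
      _ = p * f (i+1) (u-1) + (1-p) * f (i+1) ((u-1)/(1-δ)) := by
          rw [ENNReal.toReal_add (ENNReal.mul_ne_top hPtop hA1top)
            (ENNReal.mul_ne_top (by simp) hA2top),
            ENNReal.toReal_mul, ENNReal.toReal_mul,
            ENNReal.toReal_sub_of_le hPle1 (by norm_num)]
          rw [hf]
          simp only [hA1, hA2]
          norm_num
          rw [hpdef]
  -- apply the analytic lemma
  have hkey : f 0 (2*n) ≤ p ^ (n/2 : ℝ) :=
    key_analysis f p δ n Creal hp0 hple hδ0 hδn hn8 hf1 hdecay hrec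
  -- relate |R| to T 0
  have hT0 : ∀ ω, T 0 ω = ∑' k, ∏ j ∈ Finset.range k, X j ω := by
    intro ω
    rw [hTdef]
    simp only
    apply tsum_congr
    intro k
    apply Finset.prod_congr rfl
    intro j _
    congr 1
    omega
  have hRincl : ∀ ω, (∀ k, |Q k ω| ≤ q) → x < |R ω| → ENNReal.ofReal (x/q) < T 0 ω := by
    intro ω hQω hRω
    by_contra hcon
    push_neg at hcon
    have hTne : T 0 ω ≠ ⊤ := ne_top_of_le_ne_top ENNReal.ofReal_ne_top hcon
    have hterm : ∀ k, (∏ j ∈ Finset.range k, X j ω) ≠ ⊤ := by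
      intro k
      refine (ENNReal.prod_lt_top ?_).ne
      intro j _
      rw [hXdef]
      exact ENNReal.coe_lt_top
    set pk : ℕ → ℝ := fun k => (∏ j ∈ Finset.range k, X j ω).toReal with hpk
    have hsum_pk : Summable pk := by
      apply ENNReal.summable_toReal
      rw [← hT0 ω]
      exact hTne
    have hpk_eq : ∀ k, pk k = ∏ j ∈ Finset.range k, |M j ω| := by
      intro k
      rw [hpk]
      simp only
      rw [ENNReal.toReal_prod]
      apply Finset.prod_congr rfl
      intro j _
      rw [hXeq, ENNReal.toReal_ofReal (abs_nonneg _)]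
    set g : ℕ → ℝ := fun k => Q k ω * ∏ j ∈ Finset.range k, M j ω with hg
    have hgle : ∀ k, ‖g k‖ ≤ q * pk k := by
      intro k
      rw [hg, hpk_eq]
      simp only [Real.norm_eq_abs, abs_mul, Finset.abs_prod]
      exact mul_le_mul (hQω k) le_rfl (Finset.prod_nonneg fun j _ => abs_nonneg _) hq.le
    have hqpk : Summable (fun k => q * pk k) := hsum_pk.mul_left q
    have hgnorm : Summable (fun k => ‖g k‖) :=
      Summable.of_nonneg_of_le (fun k => norm_nonneg _) hgle hqpk
    have hRle : |R ω| ≤ q * ∑' k, pk k := by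
      rw [hR ω]
      calc |∑' k, Q k ω * ∏ j ∈ Finset.range k, M j ω| = ‖∑' k, g k‖ := by
            rw [Real.norm_eq_abs, hg]
        _ ≤ ∑' k, ‖g k‖ := norm_tsum_le_tsum_norm hgnorm
        _ ≤ ∑' k, q * pk k := Summable.tsum_le_tsum hgle hgnorm hqpk
        _ = q * ∑' k, pk k := tsum_mul_left
    have htsum_pk : ∑' k, pk k = (T 0 ω).toReal := by
      rw [hT0 ω, ENNReal.tsum_toReal_eq hterm]
    have hTle : (T 0 ω).toReal ≤ x/q :=
      ENNReal.toReal_le_of_le_ofReal (by positivity) hcon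
    have hfin : |R ω| ≤ x := by
      rw [htsum_pk] at hRle
      calc |R ω| ≤ q * (T 0 ω).toReal := hRle
        _ ≤ q * (x/q) := mul_le_mul_of_nonneg_left hTle hq.le
        _ = x := by field_simp
    linarith
  have hμx : μ {ω | x < |R ω|} ≤ μ {ω | ENNReal.ofReal (x/q) < T 0 ω} := by
    have hbadQ : μ {ω | ¬ ∀ k, |Q k ω| ≤ q} = 0 := by
      rw [← ae_iff]
      exact hQae
    calc μ {ω | x < |R ω|}
        ≤ μ ({ω | ENNReal.ofReal (x/q) < T 0 ω} ∪ {ω | ¬ ∀ k, |Q k ω| ≤ q}) := by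
          apply measure_mono
          intro ω hω
          by_cases hQω : ∀ k, |Q k ω| ≤ q
          · exact Or.inl (hRincl ω hQω hω)
          · exact Or.inr hQω
      _ ≤ μ {ω | ENNReal.ofReal (x/q) < T 0 ω} + μ {ω | ¬ ∀ k, |Q k ω| ≤ q} :=
          measure_union_le _ _
      _ = μ {ω | ENNReal.ofReal (x/q) < T 0 ω} := by rw [hbadQ, add_zero]
  have h2n : x/q = 2*n := by
    rw [hn]
    field_simp
  have hfinal1 : (μ {ω | x < |R ω|}).toReal ≤ f 0 (2*n) := by
    rw [hf]
    simp only
    apply ENNReal.toReal_mono (measure_ne_top μ _)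
    rw [← h2n]
    exact hμx
  have hexp : p ^ (n/2 : ℝ) = Real.exp (x / (4*q) * Real.log p) := by
    rw [Real.rpow_def_of_pos hp0]
    congr 1
    rw [hn]
    field_simp
    ring
  rw [← hexp]
  linarith
end
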